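/- Let T ∈ ℂ^{n×n×n×n} be a nonzero CPS tensor. Consider the convex problem (P'): minimize −⟨T,X⟩ over CPS tensors X with ‖X_{[3,2;1,4]}‖_* ≤ 1. If X̂ is an optimal solution of (P'), then: (1) ‖X̂_{[3,2;1,4]}‖_* = 1; (2) ‖X̂‖_F ≤ 1; (3) if ‖X̂‖_F = 1 then rank_CP(X̂) = 1. -/

import Mathlib

open scoped BigOperators ComplexOrder

/-- A fourth-order complex tensor is conjugate partial-symmetric (CPS). -/
def IsCPS {n : ℕ} (A : Fin n → Fin n → Fin n → Fin n → ℂ) : Prop :=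
  ∀ i j k l, A i j k l = A j i k l ∧ A i j k l = A i j l k ∧
    A i j k l = starRingEnd ℂ (A k l i j)

/-- Inner product of fourth-order complex tensors. -/
noncomputable def tInner {n : ℕ} (A B : Fin n → Fin n → Fin n → Fin n → ℂ) : ℂ :=
  ∑ i, ∑ j, ∑ k, ∑ l, A i j k l * starRingEnd ℂ (B i j k l)

/-- Frobenius norm of a fourth-order complex tensor. -/
noncomputable def tNorm {n : ℕ} (A : Fin n → Fin n → Fin n → Fin n → ℂ) : ℝ :=
  Real.sqrt (∑ i, ∑ j, ∑ k, ∑ l, ‖A i j k l‖ ^ 2)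

/-- The unfolding `T_{[3,2;1,4]}`: the entry in the row indexed by `(k,j)` and
the column indexed by `(i,l)` is `T_{ijkl}`. -/
def unfold3214 {n : ℕ} (T : Fin n → Fin n → Fin n → Fin n → ℂ) :
    Matrix (Fin n × Fin n) (Fin n × Fin n) ℂ :=
  fun p q => T q.1 p.2 p.1 q.2

/-- The nuclear norm of a complex square matrix: the trace of the positive
semidefinite square root of `Xᴴ X`. -/
noncomputable def nuclearNorm {m : Type*} [Fintype m] [DecidableEq m]
    (X : Matrix m m ℂ) : ℝ :=
  ((Matrix.posSemidef_conjTranspose_mul_self X).1.eigenvectorUnitary.1 *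
    Matrix.diagonal (fun i => ((√((Matrix.posSemidef_conjTranspose_mul_self X).1.eigenvalues i) : ℝ) : ℂ)) *
    (star (Matrix.posSemidef_conjTranspose_mul_self X).1.eigenvectorUnitary : Matrix m m ℂ)).trace.re

/-- The CP rank of a fourth-order complex tensor. -/
noncomputable def rankCP {n : ℕ} (A : Fin n → Fin n → Fin n → Fin n → ℂ) : ℕ :=
  sInf {R : ℕ | ∃ a b c d : Fin R → Fin n → ℂ,
    ∀ i j k l, A i j k l = ∑ t, a t i * b t j * c t k * d t l}

section NuclearAux
open Matrix

private lemma trace_UDU' {m : Type*} [Fintype m] [DecidableEq m]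
    (U : Matrix.unitaryGroup m ℂ) (d : m → ℂ) :
    ((U : Matrix m m ℂ) * Matrix.diagonal d * (star U : Matrix m m ℂ)).trace = ∑ i, d i := by
  rw [Matrix.trace_mul_cycle]
  rw [show (star U : Matrix m m ℂ) * (U : Matrix m m ℂ) = 1 from
    Matrix.UnitaryGroup.star_mul_self U]
  simp [Matrix.trace_diagonal]

private lemma nn_eq {m : Type*} [Fintype m] [DecidableEq m] (X : Matrix m m ℂ) :
    nuclearNorm X =
      ∑ i, Real.sqrt ((Matrix.posSemidef_conjTranspose_mul_self X).1.eigenvalues i) := by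
  unfold nuclearNorm
  rw [trace_UDU']
  simp [Matrix.trace_diagonal]

private lemma trace_eq_sum_eigs {m : Type*} [Fintype m] [DecidableEq m] {A : Matrix m m ℂ}
    (hA : A.IsHermitian) : A.trace = ∑ i, (hA.eigenvalues i : ℂ) := by
  conv_lhs => rw [hA.spectral_theorem, Unitary.conjStarAlgAut_apply]
  rw [trace_UDU']
  simp [Matrix.trace_diagonal]

private lemma frob_eq_trace {m : Type*} [Fintype m] [DecidableEq m] (X : Matrix m m ℂ) :
    (Xᴴ * X).trace.re = ∑ p, ∑ q, ‖X p q‖ ^ 2 := by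
  rw [Matrix.trace]
  simp only [Matrix.diag_apply, Matrix.mul_apply, Matrix.conjTranspose_apply]
  rw [Complex.re_sum, Finset.sum_comm]
  refine Finset.sum_congr rfl fun p _ => ?_
  rw [Complex.re_sum]
  refine Finset.sum_congr rfl fun q _ => ?_
  simp [Complex.star_def, Complex.mul_re, Complex.sq_norm,
    Complex.normSq_apply]

private lemma psd_smul' {m : Type*} [Fintype m] [DecidableEq m] {A : Matrix m m ℂ}
    (hA : A.PosSemidef) {c : ℝ} (hc : 0 ≤ c) : ((c : ℂ) • A).PosSemidef := by
  constructor
  · unfold Matrix.IsHermitian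
    rw [Matrix.conjTranspose_smul, hA.1]
    congr 1
    simp
  · have : (0:ℂ) ≤ (c:ℂ) := by exact_mod_cast hc
    exact (hA.smul this).2

private lemma nn_smul {m : Type*} [Fintype m] [DecidableEq m] (X : Matrix m m ℂ) {c : ℝ}
    (hc : 0 ≤ c) : nuclearNorm ((c : ℂ) • X) = c * nuclearNorm X := by
  have hB := Matrix.posSemidef_conjTranspose_mul_self X
  have hB' := Matrix.posSemidef_conjTranspose_mul_self ((c : ℂ) • X)
  have e1 : nuclearNorm X = (cfc Real.sqrt (Xᴴ * X)).trace.re := by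
    rw [hB.1.cfc_eq]; rfl
  have e2 : nuclearNorm ((c : ℂ) • X) =
      (cfc Real.sqrt (((c : ℂ) • X)ᴴ * ((c : ℂ) • X))).trace.re := by
    rw [hB'.1.cfc_eq]; rfl
  have hsq : ((c : ℂ) • X)ᴴ * ((c : ℂ) • X) = (c ^ 2 : ℝ) • (Xᴴ * X) := by
    ext a b
    simp [Matrix.mul_apply, Matrix.smul_apply, Finset.mul_sum, Complex.real_smul]
    refine Finset.sum_congr rfl fun k _ => ?_
    push_cast
    ring
  have hf : (fun x => Real.sqrt ((c ^ 2) • x)) = fun x => c * Real.sqrt x := by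
    funext x
    rw [smul_eq_mul, Real.sqrt_mul (sq_nonneg c), Real.sqrt_sq hc]
  have key : cfc Real.sqrt ((c ^ 2 : ℝ) • (Xᴴ * X)) = c • cfc Real.sqrt (Xᴴ * X) := by
    rw [← cfc_const_mul c Real.sqrt (Xᴴ * X), ← hf]
    exact (cfc_comp_smul (c ^ 2) Real.sqrt (Xᴴ * X) (ha := hB.1)).symm
  rw [e1, e2, hsq, key, Matrix.trace_smul]
  simp

private lemma nn_nonneg {m : Type*} [Fintype m] [DecidableEq m] (X : Matrix m m ℂ) :
    0 ≤ nuclearNorm X := by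
  rw [nn_eq]
  exact Finset.sum_nonneg fun i _ => Real.sqrt_nonneg _

private lemma sum_sq_le_sq_sum {m : Type*} [Fintype m] (s : m → ℝ) (hs : ∀ i, 0 ≤ s i) :
    ∑ i, s i ^ 2 ≤ (∑ i, s i) ^ 2 := by
  have h : ∀ i : m, s i ^ 2 ≤ s i * ∑ j, s j := by
    intro i
    rw [pow_two]
    exact mul_le_mul_of_nonneg_left
      (Finset.single_le_sum (fun j _ => hs j) (Finset.mem_univ i)) (hs i)
  calc ∑ i, s i ^ 2 ≤ ∑ i, s i * ∑ j, s j := Finset.sum_le_sum fun i _ => h i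
    _ = (∑ i, s i) ^ 2 := by rw [← Finset.sum_mul, pow_two]

private lemma frob_sq_le_nn_sq {m : Type*} [Fintype m] [DecidableEq m] (X : Matrix m m ℂ) :
    ∑ p, ∑ q, ‖X p q‖ ^ 2 ≤ (nuclearNorm X) ^ 2 := by
  have hB := Matrix.posSemidef_conjTranspose_mul_self X
  have hμ0 : ∀ i, 0 ≤ hB.1.eigenvalues i := hB.eigenvalues_nonneg
  have h1 : ∑ p, ∑ q, ‖X p q‖ ^ 2 = ∑ i, hB.1.eigenvalues i := by
    rw [← frob_eq_trace X, trace_eq_sum_eigs hB.1, Complex.re_sum]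
    simp
  have h2 : ∑ i, hB.1.eigenvalues i = ∑ i, Real.sqrt (hB.1.eigenvalues i) ^ 2 :=
    (Finset.sum_congr rfl fun i _ => (Real.sq_sqrt (hμ0 i)).symm)
  rw [h1, h2, nn_eq]
  exact sum_sq_le_sq_sum _ fun i => Real.sqrt_nonneg _

private lemma frob_le_nn {m : Type*} [Fintype m] [DecidableEq m] (X : Matrix m m ℂ) :
    Real.sqrt (∑ p, ∑ q, ‖X p q‖ ^ 2) ≤ nuclearNorm X := by
  have := Real.sqrt_le_sqrt (frob_sq_le_nn_sq X)
  rwa [Real.sqrt_sq (nn_nonneg X)] at this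

private lemma frob_pos {m : Type*} [Fintype m] [DecidableEq m] (X : Matrix m m ℂ)
    (h : X ≠ 0) : 0 < ∑ p, ∑ q, ‖X p q‖ ^ 2 := by
  have : ∃ p q, X p q ≠ 0 := by
    by_contra hc
    push_neg at hc
    exact h (by ext p q; exact hc p q)
  obtain ⟨p0, q0, hpq⟩ := this
  refine Finset.sum_pos' (fun p _ => Finset.sum_nonneg fun q _ => sq_nonneg _)
    ⟨p0, Finset.mem_univ _, Finset.sum_pos' (fun q _ => sq_nonneg _)
      ⟨q0, Finset.mem_univ _, pow_pos (norm_pos_iff.mpr hpq) 2⟩⟩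

private lemma nn_pos {m : Type*} [Fintype m] [DecidableEq m] (X : Matrix m m ℂ)
    (h : X ≠ 0) : 0 < nuclearNorm X :=
  lt_of_lt_of_le (Real.sqrt_pos.mpr (frob_pos X h)) (frob_le_nn X)

end NuclearAux

section RankOne
open Matrix
lemma single_nonzero {m : Type*} [Fintype m] (s : m → ℝ) (hs : ∀ i, 0 ≤ s i)
    (h1 : ∑ i, s i = 1) (h2 : ∑ i, s i ^ 2 = 1) :
    ∃ i0, s i0 = 1 ∧ ∀ j, j ≠ i0 → s j = 0 := by
  classical
  have hex : ∃ i0, s i0 ≠ 0 := by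
    by_contra h
    push_neg at h
    rw [Finset.sum_eq_zero (fun i _ => h i)] at h1
    norm_num at h1
  obtain ⟨i0, hi0⟩ := hex
  have hF : ∑ i, s i * (∑ j ∈ Finset.univ.erase i, s j) = 0 := by
    have expand : ∀ i : m, s i * (∑ j, s j) = s i ^ 2 + s i * (∑ j ∈ Finset.univ.erase i, s j) := by
      intro i
      rw [← Finset.add_sum_erase _ s (Finset.mem_univ i)]
      ring
    have : ∑ i, s i * (∑ j, s j) = ∑ i, (s i ^ 2 + s i * (∑ j ∈ Finset.univ.erase i, s j)) :=
      Finset.sum_congr rfl fun i _ => expand i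
    rw [Finset.sum_add_distrib, h2] at this
    simp only [h1, mul_one] at this
    linarith
  have hterm : ∀ i ∈ Finset.univ, (0:ℝ) ≤ s i * (∑ j ∈ Finset.univ.erase i, s j) :=
    fun i _ => mul_nonneg (hs i) (Finset.sum_nonneg fun j _ => hs j)
  have hzero := (Finset.sum_eq_zero_iff_of_nonneg hterm).mp hF
  have he : ∑ j ∈ Finset.univ.erase i0, s j = 0 := by
    have := hzero i0 (Finset.mem_univ i0)
    rcases mul_eq_zero.mp this with h | h
    · exact absurd h hi0
    · exact h
  have hz : ∀ j, j ≠ i0 → s j = 0 := by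
    intro j hj
    have hmem : j ∈ Finset.univ.erase i0 := Finset.mem_erase.mpr ⟨hj, Finset.mem_univ j⟩
    exact (Finset.sum_eq_zero_iff_of_nonneg (fun j _ => hs j)).mp he j hmem
  refine ⟨i0, ?_, hz⟩
  have := Finset.add_sum_erase _ s (Finset.mem_univ i0)
  rw [he, add_zero] at this
  -- this : s i0 = ∑ i, s i ?
  rw [← h1]
  exact this.symm ▸ rfl

lemma matrix_rank_one {m : Type*} [Fintype m] [DecidableEq m] (X : Matrix m m ℂ)
    (hs1' : nuclearNorm X = 1) (h2 : ∑ p, ∑ q, ‖X p q‖ ^ 2 = 1) :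
    ∃ u v : m → ℂ, ∀ p q, X p q = u p * v q := by
  classical
  have hB := Matrix.posSemidef_conjTranspose_mul_self X
  set μ : m → ℝ := hB.1.eigenvalues with hμdef
  have hμ0 : ∀ i, 0 ≤ μ i := hB.eigenvalues_nonneg
  have hμsum : ∑ i, μ i = 1 := by
    rw [← h2, ← frob_eq_trace X, trace_eq_sum_eigs hB.1, Complex.re_sum]
    simp
    rfl
  have hs1 : ∑ i, Real.sqrt (μ i) = 1 := by
    rw [← hs1']; exact (nn_eq X).symm
  have hs2 : ∑ i, Real.sqrt (μ i) ^ 2 = 1 := by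
    rw [← hμsum]; exact Finset.sum_congr rfl fun i _ => Real.sq_sqrt (hμ0 i)
  obtain ⟨i0, hi1, hi0⟩ := single_nonzero _ (fun i => Real.sqrt_nonneg _) hs1 hs2
  have hμi0 : μ i0 = 1 := by rw [← Real.sq_sqrt (hμ0 i0), hi1]; norm_num
  have hμj : ∀ j, j ≠ i0 → μ j = 0 := by
    intro j hj
    rw [← Real.sq_sqrt (hμ0 j), hi0 j hj]
    norm_num
  set U : Matrix m m ℂ := (hB.1.eigenvectorUnitary : Matrix m m ℂ) with hUdef
  set w : m → ℂ := fun p => U p i0 with hwdef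
  have hBent : ∀ a b, (Xᴴ * X) a b = w a * star (w b) := by
    intro a b
    conv_lhs => rw [hB.1.spectral_theorem, Unitary.conjStarAlgAut_apply]
    rw [Matrix.mul_apply]
    rw [Finset.sum_eq_single i0]
    · rw [Matrix.mul_diagonal, ← hμdef, ← hUdef]
      simp only [Function.comp_apply, hμi0]
      simp [Matrix.star_apply, hwdef]
    · intro k _ hk
      rw [Matrix.mul_diagonal, ← hμdef]
      simp [hμj k hk]
    · intro h; exact absurd (Finset.mem_univ i0) h
  have hw1 : ∑ q, star (w q) * w q = 1 := by
    have h : star U * U = 1 := Matrix.UnitaryGroup.star_mul_self hB.1.eigenvectorUnitary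
    have h2' : (star U * U) i0 i0 = (1 : Matrix m m ℂ) i0 i0 := by rw [h]
    rw [Matrix.mul_apply, Matrix.one_apply_eq] at h2'
    simpa [Matrix.star_apply, hwdef] using h2'
  set u : m → ℂ := fun p => ∑ q, X p q * w q with hudef
  have hγ : ∑ p, star (u p) * u p = 1 := by
    have step1 : ∀ p, star (u p) * u p
        = ∑ r, ∑ q, star (w r) * w q * (star (X p r) * X p q) := by
      intro p
      have : star (u p) = ∑ r, star (X p r) * star (w r) := by
        rw [hudef]
        rw [star_sum]
        exact Finset.sum_congr rfl fun r _ => by rw [star_mul']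
      rw [this, hudef]
      rw [Finset.sum_mul_sum]
      exact Finset.sum_congr rfl fun r _ => Finset.sum_congr rfl fun q _ => by ring
    calc ∑ p, star (u p) * u p
        = ∑ p, ∑ r, ∑ q, star (w r) * w q * (star (X p r) * X p q) :=
          Finset.sum_congr rfl fun p _ => step1 p
      _ = ∑ r, ∑ q, star (w r) * w q * ((Xᴴ * X) r q) := by
          rw [Finset.sum_comm]
          refine Finset.sum_congr rfl fun r _ => ?_
          rw [Finset.sum_comm]
          refine Finset.sum_congr rfl fun q _ => ?_
          rw [Matrix.mul_apply, Finset.mul_sum]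
          exact Finset.sum_congr rfl fun p _ => by rw [Matrix.conjTranspose_apply]
      _ = ∑ r, ∑ q, (star (w r) * w r) * (w q * star (w q)) := by
          refine Finset.sum_congr rfl fun r _ => Finset.sum_congr rfl fun q _ => ?_
          rw [hBent r q]; ring
      _ = 1 := by
          rw [← Finset.sum_mul_sum]
          rw [hw1, one_mul]
          rw [show ∑ q, w q * star (w q) = ∑ q, star (w q) * w q from
            Finset.sum_congr rfl fun q _ => mul_comm _ _, hw1]
  have hγ' : ∑ p, u p * star (u p) = 1 := by
    rw [show ∑ p, u p * star (u p) = ∑ p, star (u p) * u p from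
      Finset.sum_congr rfl fun p _ => mul_comm _ _, hγ]
  have expand : ∀ p q, (X p q - u p * star (w q)) * star (X p q - u p * star (w q)) =
      X p q * star (X p q) - X p q * (star (u p) * w q)
        - (u p * star (w q)) * star (X p q) + (u p * star (u p)) * (star (w q) * w q) := by
    intro p q
    have hsb : star (u p * star (w q)) = star (u p) * w q := by
      rw [star_mul', star_star]
    rw [star_sub, hsb]
    ring
  have hA1 : ∑ p, ∑ q, X p q * star (X p q) = 1 := by
    have hterm : ∀ p q : m, X p q * star (X p q) = ((‖X p q‖ : ℝ) : ℂ) ^ 2 := by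
      intro p q
      rw [Complex.star_def, Complex.mul_conj]
      norm_cast
      rw [Complex.sq_norm]
    calc ∑ p, ∑ q, X p q * star (X p q)
        = ((∑ p, ∑ q, ‖X p q‖ ^ 2 : ℝ) : ℂ) := by
          push_cast
          exact Finset.sum_congr rfl fun p _ => Finset.sum_congr rfl fun q _ => hterm p q
      _ = 1 := by rw [h2]; norm_num
  have hA2 : ∑ p, ∑ q, X p q * (star (u p) * w q) = 1 := by
    calc ∑ p, ∑ q, X p q * (star (u p) * w q)
        = ∑ p, star (u p) * u p := by
          refine Finset.sum_congr rfl fun p _ => ?_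
          rw [hudef]
          simp only
          rw [Finset.mul_sum]
          exact Finset.sum_congr rfl fun q _ => by ring
      _ = 1 := hγ
  have hA3 : ∑ p, ∑ q, (u p * star (w q)) * star (X p q) = 1 := by
    calc ∑ p, ∑ q, (u p * star (w q)) * star (X p q)
        = ∑ p, u p * star (u p) := by
          refine Finset.sum_congr rfl fun p _ => ?_
          have : star (u p) = ∑ q, star (X p q) * star (w q) := by
            rw [hudef, star_sum]
            exact Finset.sum_congr rfl fun q _ => by rw [star_mul']
          rw [this, Finset.mul_sum]
          exact Finset.sum_congr rfl fun q _ => by ring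
      _ = 1 := hγ'
  have hA4 : ∑ p, ∑ q, (u p * star (u p)) * (star (w q) * w q) = 1 := by
    rw [← Finset.sum_mul_sum, hγ', hw1, one_mul]
  have hzero : ∑ p, ∑ q,
      (X p q - u p * star (w q)) * star (X p q - u p * star (w q)) = 0 := by
    have : ∑ p, ∑ q, (X p q - u p * star (w q)) * star (X p q - u p * star (w q))
        = ∑ p, ∑ q, (X p q * star (X p q) - X p q * (star (u p) * w q)
          - (u p * star (w q)) * star (X p q) + (u p * star (u p)) * (star (w q) * w q)) :=
      Finset.sum_congr rfl fun p _ => Finset.sum_congr rfl fun q _ => expand p q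
    rw [this]
    simp only [Finset.sum_add_distrib, Finset.sum_sub_distrib]
    rw [hA1, hA2, hA3, hA4]
    ring
  have hre : ∑ p, ∑ q, ‖X p q - u p * star (w q)‖ ^ 2 = 0 := by
    have := congrArg Complex.re hzero
    rw [Complex.re_sum, Complex.zero_re] at this
    rw [← this]
    refine Finset.sum_congr rfl fun p _ => ?_
    rw [Complex.re_sum]
    refine Finset.sum_congr rfl fun q _ => ?_
    simp [Complex.star_def, Complex.mul_re, Complex.sq_norm,
      Complex.normSq_apply]
    ring
  refine ⟨u, fun q => star (w q), fun p q => ?_⟩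
  have h1' := (Finset.sum_eq_zero_iff_of_nonneg
    (fun p _ => Finset.sum_nonneg fun q _ => sq_nonneg ‖X p q - u p * star (w q)‖)).mp hre
    p (Finset.mem_univ p)
  have h2' := (Finset.sum_eq_zero_iff_of_nonneg
    (fun q _ => sq_nonneg ‖X p q - u p * star (w q)‖)).mp h1' q (Finset.mem_univ q)
  have := norm_eq_zero.mp (pow_eq_zero_iff (by norm_num : 2 ≠ 0) |>.mp h2')
  exact sub_eq_zero.mp this
end RankOne

section TensorAux

private lemma tensor_sum_reorder {n : ℕ} (g : Fin n → Fin n → Fin n → Fin n → ℝ) :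
    ∑ i, ∑ j, ∑ k, ∑ l, g i j k l = ∑ k, ∑ j, ∑ i, ∑ l, g i j k l := by
  calc ∑ i, ∑ j, ∑ k, ∑ l, g i j k l
      = ∑ i, ∑ k, ∑ j, ∑ l, g i j k l :=
        Finset.sum_congr rfl fun i _ => Finset.sum_comm
    _ = ∑ k, ∑ i, ∑ j, ∑ l, g i j k l := Finset.sum_comm
    _ = ∑ k, ∑ j, ∑ i, ∑ l, g i j k l :=
        Finset.sum_congr rfl fun k _ => Finset.sum_comm

private lemma frobSq_unfold {n : ℕ} (X : Fin n → Fin n → Fin n → Fin n → ℂ) :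
    ∑ p, ∑ q, ‖unfold3214 X p q‖ ^ 2 = ∑ i, ∑ j, ∑ k, ∑ l, ‖X i j k l‖ ^ 2 := by
  rw [tensor_sum_reorder]
  rw [Fintype.sum_prod_type]
  refine Finset.sum_congr rfl fun k _ => Finset.sum_congr rfl fun j _ => ?_
  rw [Fintype.sum_prod_type]
  rfl

private lemma tinner_self_re {n : ℕ} (A : Fin n → Fin n → Fin n → Fin n → ℂ) :
    (tInner A A).re = ∑ i, ∑ j, ∑ k, ∑ l, ‖A i j k l‖ ^ 2 := by
  unfold tInner
  rw [Complex.re_sum]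
  refine Finset.sum_congr rfl fun i _ => ?_
  rw [Complex.re_sum]
  refine Finset.sum_congr rfl fun j _ => ?_
  rw [Complex.re_sum]
  refine Finset.sum_congr rfl fun k _ => ?_
  rw [Complex.re_sum]
  refine Finset.sum_congr rfl fun l _ => ?_
  simp [Complex.mul_re, Complex.sq_norm, Complex.normSq_apply]

private lemma tinner_scale {n : ℕ} (T X : Fin n → Fin n → Fin n → Fin n → ℂ) (c : ℝ) :
    (tInner T (fun i j k l => (c : ℂ) * X i j k l)).re = c * (tInner T X).re := by
  unfold tInner
  have h : ∀ i j k l : Fin n, T i j k l * starRingEnd ℂ ((c : ℂ) * X i j k l)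
      = (c : ℂ) * (T i j k l * starRingEnd ℂ (X i j k l)) := by
    intro i j k l
    rw [map_mul, Complex.conj_ofReal]
    ring
  simp only [h, ← Finset.mul_sum]
  rw [Complex.re_ofReal_mul]

private lemma cps_scale {n : ℕ} {X : Fin n → Fin n → Fin n → Fin n → ℂ} (c : ℝ)
    (hX : IsCPS X) : IsCPS (fun i j k l => (c : ℂ) * X i j k l) := by
  intro i j k l
  simp only []
  refine ⟨by rw [(hX i j k l).1], by rw [(hX i j k l).2.1], ?_⟩
  rw [map_mul, Complex.conj_ofReal, (hX i j k l).2.2]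

private lemma unfold_scale {n : ℕ} (X : Fin n → Fin n → Fin n → Fin n → ℂ) (c : ℝ) :
    unfold3214 (fun i j k l => (c : ℂ) * X i j k l) = (c : ℂ) • unfold3214 X := by
  ext p q
  simp [unfold3214, Matrix.smul_apply, smul_eq_mul]

private lemma unfold_ne_zero {n : ℕ} {X : Fin n → Fin n → Fin n → Fin n → ℂ} (hX : X ≠ 0) :
    unfold3214 X ≠ 0 := by
  intro h
  apply hX
  funext i j k l
  have := congrFun (congrFun h (k, j)) (i, l)
  simpa [unfold3214] using this

private lemma tensor_ne_zero_of_entry {n : ℕ} {X : Fin n → Fin n → Fin n → Fin n → ℂ}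
    (hX : X ≠ 0) : ∃ i j k l, X i j k l ≠ 0 := by
  by_contra hc
  push_neg at hc
  exact hX (by funext i j k l; exact hc i j k l)

end TensorAux


/-- Properties of an optimal solution of the nuclear-norm constrained convex
relaxation of the best rank-one approximation problem. -/
theorem convex_relaxation_constrained_properties {n : ℕ}
    (T : Fin n → Fin n → Fin n → Fin n → ℂ) (hTcps : IsCPS T) (hT0 : T ≠ 0)
    (Xhat : Fin n → Fin n → Fin n → Fin n → ℂ)
    (hXhatCps : IsCPS Xhat) (hXhatFeas : nuclearNorm (unfold3214 Xhat) ≤ 1)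
    (hXhatOpt : ∀ X : Fin n → Fin n → Fin n → Fin n → ℂ, IsCPS X →
      nuclearNorm (unfold3214 X) ≤ 1 →
      -(tInner T Xhat).re ≤ -(tInner T X).re) :
    nuclearNorm (unfold3214 Xhat) = 1 ∧
    tNorm Xhat ≤ 1 ∧
    (tNorm Xhat = 1 → rankCP Xhat = 1) := by
  classical
  -- T has positive self inner product
  have hTfrob : 0 < (tInner T T).re := by
    rw [tinner_self_re, ← frobSq_unfold]
    exact frob_pos _ (unfold_ne_zero hT0)
  set ν : ℝ := nuclearNorm (unfold3214 T) with hνdef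
  have hν : 0 < ν := nn_pos _ (unfold_ne_zero hT0)
  -- the scaled feasible point
  have hYopt := hXhatOpt (fun i j k l => ((ν⁻¹ : ℝ) : ℂ) * T i j k l)
    (cps_scale _ hTcps)
    (by rw [unfold_scale, nn_smul _ (inv_nonneg.mpr hν.le), ← hνdef,
          inv_mul_cancel₀ hν.ne'])
  rw [neg_le_neg_iff] at hYopt
  rw [tinner_scale] at hYopt
  have hXpos : 0 < (tInner T Xhat).re :=
    lt_of_lt_of_le (by positivity) hYopt
  have hXhat0 : Xhat ≠ 0 := by
    intro h
    rw [h] at hXpos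
    simp [tInner] at hXpos
  set νh : ℝ := nuclearNorm (unfold3214 Xhat) with hνhdef
  have hνh : 0 < νh := nn_pos _ (unfold_ne_zero hXhat0)
  -- part 1
  have part1 : νh = 1 := by
    by_contra hne
    have hlt : νh < 1 := lt_of_le_of_ne hXhatFeas hne
    have hZopt := hXhatOpt (fun i j k l => ((νh⁻¹ : ℝ) : ℂ) * Xhat i j k l)
      (cps_scale _ hXhatCps)
      (by rw [unfold_scale, nn_smul _ (inv_nonneg.mpr hνh.le), ← hνhdef,
            inv_mul_cancel₀ hνh.ne'])
    rw [neg_le_neg_iff, tinner_scale] at hZopt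
    have hinv : 1 < νh⁻¹ := (one_lt_inv_iff₀).mpr ⟨hνh, hlt⟩
    nlinarith
  refine ⟨part1, ?_, ?_⟩
  -- part 2
  · unfold tNorm
    rw [← frobSq_unfold]
    calc Real.sqrt (∑ p, ∑ q, ‖unfold3214 Xhat p q‖ ^ 2)
        ≤ nuclearNorm (unfold3214 Xhat) := frob_le_nn _
      _ ≤ 1 := hXhatFeas
  -- part 3
  · intro htn
    have hfrob1 : ∑ p, ∑ q, ‖unfold3214 Xhat p q‖ ^ 2 = 1 := by
      unfold tNorm at htn
      rw [← frobSq_unfold] at htn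
      exact Real.sqrt_eq_one.mp htn
    obtain ⟨u, v, huv⟩ := matrix_rank_one (unfold3214 Xhat) part1 hfrob1
    -- Xhat i j k l = u (k, j) * v (i, l)
    have hXuv : ∀ i j k l, Xhat i j k l = u (k, j) * v (i, l) := by
      intro i j k l
      exact huv (k, j) (i, l)
    obtain ⟨i0, j0, k0, l0, hent⟩ := tensor_ne_zero_of_entry hXhat0
    rw [hXuv] at hent
    have hu0 : u (k0, j0) ≠ 0 := fun h => hent (by rw [h]; ring)
    have hv0 : v (i0, l0) ≠ 0 := fun h => hent (by rw [h]; ring)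
    -- factor v
    have hva : ∀ i l, v (i, l) = (u (k0, i) / u (k0, j0)) * v (j0, l) := by
      intro i l
      have h1 := (hXhatCps i j0 k0 l).1
      rw [hXuv, hXuv] at h1
      field_simp
      linear_combination h1
    -- factor u
    have hub : ∀ k j, u (k, j) = u (l0, j) * (v (i0, k) / v (i0, l0)) := by
      intro k j
      have h1 := (hXhatCps i0 j k l0).2.1
      rw [hXuv, hXuv] at h1
      field_simp
      linear_combination h1
    have hfact : ∀ i j k l, Xhat i j k l =
        (u (k0, i) / u (k0, j0)) * u (l0, j) * (v (i0, k) / v (i0, l0)) * v (j0, l) := by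
      intro i j k l
      rw [hXuv, hva i l, hub k j]
      ring
    -- rankCP = 1
    unfold rankCP
    have h1mem : 1 ∈ {R : ℕ | ∃ a b c d : Fin R → Fin n → ℂ,
        ∀ i j k l, Xhat i j k l = ∑ t, a t i * b t j * c t k * d t l} := by
      refine ⟨fun _ i => u (k0, i) / u (k0, j0), fun _ j => u (l0, j),
        fun _ k => v (i0, k) / v (i0, l0), fun _ l => v (j0, l), fun i j k l => ?_⟩
      rw [Fin.sum_univ_one, hfact]
    have h0nmem : 0 ∉ {R : ℕ | ∃ a b c d : Fin R → Fin n → ℂ,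
        ∀ i j k l, Xhat i j k l = ∑ t, a t i * b t j * c t k * d t l} := by
      rintro ⟨a, b, c, d, h⟩
      apply hent
      rw [← hXuv i0 j0 k0 l0]
      simpa using h i0 j0 k0 l0
    have hle := Nat.sInf_le h1mem
    have hne0 : sInf {R : ℕ | ∃ a b c d : Fin R → Fin n → ℂ,
        ∀ i j k l, Xhat i j k l = ∑ t, a t i * b t j * c t k * d t l} ≠ 0 := by
      intro hz
      rcases Nat.sInf_eq_zero.mp hz with h | h
      · exact h0nmem h
      · exact Set.notMem_empty 1 (h ▸ h1mem)
    exact le_antisymm hle (Nat.one_le_iff_ne_zero.mpr hne0)
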